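/- If the 2-cocycle α is normalized, i.e. α(1,g) = α(g,1) = 1 for all g ∈ G, then the twisted group algebra K^α[G] is symmetric and projectively special with loop constant |G|: for all x, y ∈ K^α[G], ε(μ_α(x ⊗ y)) = ε(μ_α(y ⊗ x)), where ε is the linear functional taking the coefficient at the identity element of G, and μ_α ∘ Δ_α = |G| · id, i.e. μ_α(Δ_α(x)) = (Fintype.card G) • x for all x. -/

import Mathlib

open TensorProduct

/-- If the 2-cocycle `α` is normalized (`α(1,g) = α(g,1) = 1`), then the twisted group
algebra `K^α[G]` is symmetric (`ε(μ_α(x ⊗ y)) = ε(μ_α(y ⊗ x))`, where `ε` takes the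
coefficient at the identity) and projectively special with loop constant `|G|`
(`μ_α ∘ Δ_α = |G| • id`). -/
theorem twisted_group_algebra_symmetric_projectively_special
    (K G : Type*) [Field K] [Group G] [Fintype G]
    (α : G × G → Kˣ)
    (hcoc : ∀ g h k : G, α (g, h) * α (g * h, k) = α (h, k) * α (g, h * k))
    (hnorm : ∀ g : G, α (1, g) = 1 ∧ α (g, 1) = 1)
    (μα : (G →₀ K) ⊗[K] (G →₀ K) →ₗ[K] (G →₀ K))
    (hμα : ∀ g h : G,
      μα (Finsupp.single g 1 ⊗ₜ[K] Finsupp.single h 1) =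
        (α (g, h) : K) • Finsupp.single (g * h) 1)
    (Δα : (G →₀ K) →ₗ[K] (G →₀ K) ⊗[K] (G →₀ K))
    (hΔα : ∀ g : G,
      Δα (Finsupp.single g 1) =
        ∑ y : G,
          ((α (y, y⁻¹ * g))⁻¹ : Kˣ) •
            (Finsupp.single y (1 : K) ⊗ₜ[K] Finsupp.single (y⁻¹ * g) (1 : K)))
    (ε : (G →₀ K) →ₗ[K] K)
    (hε : ∀ f : G →₀ K, ε f = f 1) :
    (∀ x y : (G →₀ K), ε (μα (x ⊗ₜ[K] y)) = ε (μα (y ⊗ₜ[K] x))) ∧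
      ∀ x : (G →₀ K), μα (Δα x) = (Fintype.card G) • x := by
  have hsingle : ∀ g h : G,
      ε (μα (Finsupp.single g (1:K) ⊗ₜ[K] Finsupp.single h 1)) =
        ε (μα (Finsupp.single h (1:K) ⊗ₜ[K] Finsupp.single g 1)) := by
    intro g h
    rw [hμα, hμα, map_smul, map_smul, hε, hε]
    by_cases hgh : g * h = 1
    · have hg : g⁻¹ = h := mul_eq_one_iff_inv_eq.mp hgh
      have hhg : h * g = 1 := by rw [← hg, inv_mul_cancel]
      have key : α (g, h) = α (h, g) := by
        have := hcoc g h g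
        rw [hgh, hhg, (hnorm g).1, (hnorm g).2] at this
        simpa using this
      rw [hgh, hhg, key]
    · have hhg : h * g ≠ 1 := by
        intro h1
        apply hgh
        have := mul_eq_one_iff_inv_eq.mp h1
        rw [← this, inv_mul_cancel]
      simp [Finsupp.single_apply, hgh, hhg]
  constructor
  · intro x y
    induction x using Finsupp.induction_linear with
    | zero => simp
    | add a b ha hb => simp [add_tmul, tmul_add, ha, hb]
    | single g c =>
      induction y using Finsupp.induction_linear with
      | zero => simp
      | add a b ha hb => simp [add_tmul, tmul_add, ha, hb]
      | single h d =>
        have : (Finsupp.single g c : G →₀ K) = c • Finsupp.single g 1 := by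
          simp [Finsupp.smul_single]
        rw [this]
        have : (Finsupp.single h d : G →₀ K) = d • Finsupp.single h 1 := by
          simp [Finsupp.smul_single]
        rw [this]
        simp only [smul_tmul, tmul_smul, map_smul, smul_eq_mul]
        rw [hsingle g h]; ring
  · intro x
    induction x using Finsupp.induction_linear with
    | zero => simp
    | add a b ha hb => simp [ha, hb]
    | single g c =>
      have : (Finsupp.single g c : G →₀ K) = c • Finsupp.single g 1 := by
        simp [Finsupp.smul_single]
      have key : μα (Δα (Finsupp.single g (1:K))) =
          (Fintype.card G) • Finsupp.single g (1:K) := by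
        rw [hΔα, map_sum]
        have : ∀ y : G, μα (((α (y, y⁻¹ * g))⁻¹ : Kˣ) •
            (Finsupp.single y (1:K) ⊗ₜ[K] Finsupp.single (y⁻¹ * g) 1)) =
            Finsupp.single g 1 := by
          intro y
          rw [Units.smul_def, map_smul, hμα, smul_smul, Units.inv_mul, one_smul,
            mul_inv_cancel_left]
        rw [Finset.sum_congr rfl fun y _ => this y, Finset.sum_const, Finset.card_univ]
      rw [this, map_smul, map_smul, key, smul_comm]
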